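/- In the setting of the error formula $f(A)B - F_j = \sum_{h=1}^n x_h y_h^* \Pi U_{j+1}\Gamma_{j+1} M_h$ with $M_h := E_j^* K^{-1}[f(A_j) - f(\lambda_h)I](A_j - \lambda_h I)^{-1}E_1 R_B \in \mathbb{C}^{s\times s}$, one has the bound $\|f(A)B - F_j\|_F \le \kappa_{\mathrm{eig}}(A)\,\|\Pi U_{j+1}\Gamma_{j+1}\|_F\,\max_{1\le h\le n}\|M_h\|_2$, where $\kappa_{\mathrm{eig}}(A) = \|X\|_2\|X^{-1}\|_2$ for the eigenvector matrix $X = [x_1,\ldots,x_n]$. The key linear-algebra step is: for any $V \in \mathbb{C}^{n\times s}$ and matrices $M_h \in \mathbb{C}^{s\times s}$, $\|\sum_{h=1}^n x_h y_h^* V M_h\|_F \le \|V\|_F\, \|X\|_2\,\|X^{-1}\|_2\, \max_h \|M_h\|_2$. -/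

import Mathlib

open Matrix Polynomial

set_option synthInstance.maxHeartbeats 1000000
set_option maxHeartbeats 1000000

abbrev Mat (s : ℕ) := Matrix (Fin s) (Fin s) ℂ

/-- The `(p,q)` block (of size `s × s`) of a `js × js` block matrix. -/
def blk {j s : ℕ} (H : Matrix (Fin j × Fin s) (Fin j × Fin s) ℂ) (p q : Fin j) :
    Mat s := Matrix.of fun a b => H (p, a) (q, b)

/-- The `i`-th block canonical vector `E_i = e_i ⊗ I_s`. -/
def blkE {j s : ℕ} (i : Fin j) : Matrix (Fin j × Fin s) (Fin s) ℂ :=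
  Matrix.of fun pa b => if pa.1 = i ∧ pa.2 = b then 1 else 0

/-- Block upper Hessenberg: all blocks strictly below the first subdiagonal vanish. -/
def BUH {j s : ℕ} (H : Matrix (Fin j × Fin s) (Fin j × Fin s) ℂ) : Prop :=
  ∀ p q : Fin j, (q : ℕ) + 1 < (p : ℕ) → blk H p q = 0

/-- The action `P(N) ∘ W := ∑ᵢ Nⁱ W Pᵢ` of a matrix polynomial on a block vector. -/
noncomputable def act {n : Type*} [Fintype n] [DecidableEq n] {s : ℕ}
    (P : Polynomial (Mat s)) (N : Matrix n n ℂ) (W : Matrix n (Fin s) ℂ) :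
    Matrix n (Fin s) ℂ :=
  ∑ i ∈ Finset.range (P.natDegree + 1), (N ^ i) * W * P.coeff i

/-- Evaluation of a matrix polynomial at a scalar: `P(z) = ∑ᵢ zⁱ Pᵢ`. -/
noncomputable def evalS {s : ℕ} (P : Polynomial (Mat s)) (z : ℂ) : Mat s :=
  ∑ i ∈ Finset.range (P.natDegree + 1), z ^ i • P.coeff i

/-- The subdiagonal block `Γ_i = H_{(i-1)(i-2)}` (paper indexing, `2 ≤ i ≤ j`),
with the convention `Γ_i = I` out of range (in particular `Γ₁ = I`). -/
noncomputable def Gam {j s : ℕ} (H : Matrix (Fin j × Fin s) (Fin j × Fin s) ℂ)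
    (i : ℕ) : Mat s :=
  if h : 2 ≤ i ∧ i ≤ j then blk H ⟨i - 1, by omega⟩ ⟨i - 2, by omega⟩ else 1

/-- Frobenius norm of a complex matrix. -/
noncomputable def frob {m n : Type*} [Fintype m] [Fintype n]
    (M : Matrix m n ℂ) : ℝ :=
  Real.sqrt (∑ i, ∑ j, ‖M i j‖ ^ 2)

/-- Spectral (operator 2-) norm of a square complex matrix. -/
noncomputable def op2 {n : Type*} [Fintype n] [DecidableEq n]
    (M : Matrix n n ℂ) : ℝ :=
  ‖Matrix.toEuclideanCLM (𝕜 := ℂ) M‖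

lemma op2_nonneg {k : ℕ} (A : Matrix (Fin k) (Fin k) ℂ) : 0 ≤ op2 A :=
  norm_nonneg _

lemma op2_conjTranspose {k : ℕ} (A : Matrix (Fin k) (Fin k) ℂ) : op2 Aᴴ = op2 A := by
  unfold op2
  rw [show Aᴴ = star A from rfl, map_star, ContinuousLinearMap.star_eq_adjoint]
  exact LinearIsometryEquiv.norm_map ContinuousLinearMap.adjoint _

lemma sq_mulVec_le {k : ℕ} (A : Matrix (Fin k) (Fin k) ℂ) (x : Fin k → ℂ) :
    ∑ i, ‖A.mulVec x i‖ ^ 2 ≤ op2 A ^ 2 * ∑ i, ‖x i‖ ^ 2 := by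
  have h := (Matrix.toEuclideanCLM (𝕜 := ℂ) A).le_opNorm ((WithLp.equiv 2 _).symm x)
  rw [show (Matrix.toEuclideanCLM (𝕜 := ℂ) A) ((WithLp.equiv 2 _).symm x) =
      (WithLp.equiv 2 (Fin k → ℂ)).symm (A.mulVec x) from rfl] at h
  rw [EuclideanSpace.norm_eq, EuclideanSpace.norm_eq] at h
  have hx : ∀ i, ‖((WithLp.equiv 2 (Fin k → ℂ)).symm (A.mulVec x)) i‖ = ‖A.mulVec x i‖ :=
    fun i => rfl
  have hx' : ∀ i, ‖((WithLp.equiv 2 (Fin k → ℂ)).symm x) i‖ = ‖x i‖ := fun i => rfl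
  simp only [hx, hx'] at h
  have h1 : (0:ℝ) ≤ ∑ i, ‖A.mulVec x i‖ ^ 2 := by positivity
  have h2 : (0:ℝ) ≤ ∑ i, ‖x i‖ ^ 2 := by positivity
  calc ∑ i, ‖A.mulVec x i‖ ^ 2 = Real.sqrt (∑ i, ‖A.mulVec x i‖ ^ 2) ^ 2 :=
        (Real.sq_sqrt h1).symm
    _ ≤ (op2 A * Real.sqrt (∑ i, ‖x i‖ ^ 2)) ^ 2 := by
        apply pow_le_pow_left₀ (Real.sqrt_nonneg _) h
    _ = op2 A ^ 2 * ∑ i, ‖x i‖ ^ 2 := by rw [mul_pow, Real.sq_sqrt h2]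

lemma frob_mul_le_left {k s : ℕ} (A : Matrix (Fin k) (Fin k) ℂ)
    (B : Matrix (Fin k) (Fin s) ℂ) : frob (A * B) ≤ op2 A * frob B := by
  unfold frob
  rw [show op2 A * Real.sqrt (∑ i, ∑ j, ‖B i j‖ ^ 2)
      = Real.sqrt (op2 A ^ 2 * ∑ i, ∑ j, ‖B i j‖ ^ 2) by
    rw [Real.sqrt_mul (by positivity), Real.sqrt_sq (op2_nonneg A)]]
  apply Real.sqrt_le_sqrt
  rw [Finset.sum_comm]
  calc ∑ b, ∑ i, ‖(A * B) i b‖ ^ 2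
      = ∑ b, ∑ i, ‖A.mulVec (fun c => B c b) i‖ ^ 2 := by
        refine Finset.sum_congr rfl fun b _ => Finset.sum_congr rfl fun i _ => ?_
        simp [Matrix.mul_apply, Matrix.mulVec, dotProduct]
    _ ≤ ∑ b, op2 A ^ 2 * ∑ c, ‖B c b‖ ^ 2 :=
        Finset.sum_le_sum fun b _ => sq_mulVec_le A _
    _ = op2 A ^ 2 * ∑ i, ∑ j, ‖B i j‖ ^ 2 := by
        rw [← Finset.mul_sum, Finset.sum_comm]

lemma key_step {n s : ℕ} (X : Matrix (Fin n) (Fin n) ℂ)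
    (V : Matrix (Fin n) (Fin s) ℂ) (Mh : Fin n → Mat s) :
    frob (∑ h : Fin n,
        Matrix.vecMulVec (fun p => X p h) (fun q => X⁻¹ h q) * V * Mh h) ≤
      frob V * op2 X * op2 X⁻¹ * ⨆ h : Fin n, op2 (Mh h) := by
  rcases isEmpty_or_nonempty (Fin n) with hne | hne
  · simp [frob, Real.iSup_of_isEmpty]
  set C : ℝ := ⨆ h : Fin n, op2 (Mh h) with hC
  have hbdd : BddAbove (Set.range fun h => op2 (Mh h)) :=
    Set.Finite.bddAbove (Set.finite_range _)
  have hCle : ∀ h, op2 (Mh h) ≤ C := fun h => le_ciSup hbdd h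
  have hC0 : 0 ≤ C := le_trans (op2_nonneg _) (hCle hne.some)
  set W : Matrix (Fin n) (Fin s) ℂ := X⁻¹ * V with hW
  set R : Matrix (Fin n) (Fin s) ℂ :=
    Matrix.of (fun h b => ∑ a, W h a * Mh h a b) with hR
  have hXR : (∑ h : Fin n,
      Matrix.vecMulVec (fun p => X p h) (fun q => X⁻¹ h q) * V * Mh h) = X * R := by
    ext p b
    simp only [Matrix.sum_apply, Matrix.mul_apply, Matrix.vecMulVec_apply, hR, hW,
      Matrix.of_apply, Finset.mul_sum, Finset.sum_mul]
    refine Finset.sum_congr rfl fun h _ => Finset.sum_congr rfl fun a _ => ?_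
    simp [mul_assoc]
  have h1 : frob (X * R) ≤ op2 X * frob R := frob_mul_le_left X R
  have h3 : frob W ≤ op2 X⁻¹ * frob V := frob_mul_le_left X⁻¹ V
  have h2 : frob R ≤ C * frob W := by
    unfold frob
    rw [show C * Real.sqrt (∑ i, ∑ j, ‖W i j‖ ^ 2)
        = Real.sqrt (C ^ 2 * ∑ i, ∑ j, ‖W i j‖ ^ 2) by
      rw [Real.sqrt_mul (by positivity), Real.sqrt_sq hC0]]
    apply Real.sqrt_le_sqrt
    rw [Finset.mul_sum]
    refine Finset.sum_le_sum fun h _ => ?_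
    have hrow : ∀ b, ‖R h b‖ = ‖(Mh h)ᴴ.mulVec (star (W h)) b‖ := by
      intro b
      have : (Mh h)ᴴ.mulVec (star (W h)) b = star (R h b) := by
        simp only [Matrix.mulVec, dotProduct, Matrix.conjTranspose_apply, hR,
          Matrix.of_apply, star_sum, Pi.star_apply, star_mul']
        refine Finset.sum_congr rfl fun a _ => ?_
        ring
      rw [this, norm_star]
    calc ∑ b, ‖R h b‖ ^ 2 = ∑ b, ‖(Mh h)ᴴ.mulVec (star (W h)) b‖ ^ 2 := by
          simp only [hrow]
      _ ≤ op2 (Mh h)ᴴ ^ 2 * ∑ a, ‖star (W h) a‖ ^ 2 := sq_mulVec_le _ _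
      _ = op2 (Mh h) ^ 2 * ∑ a, ‖W h a‖ ^ 2 := by
          rw [op2_conjTranspose]
          congr 1
          exact Finset.sum_congr rfl fun a _ => by rw [Pi.star_apply, norm_star]
      _ ≤ C ^ 2 * ∑ a, ‖W h a‖ ^ 2 := by
          apply mul_le_mul_of_nonneg_right _ (by positivity)
          exact pow_le_pow_left₀ (op2_nonneg _) (hCle h) 2
  calc frob (∑ h : Fin n,
        Matrix.vecMulVec (fun p => X p h) (fun q => X⁻¹ h q) * V * Mh h)
      = frob (X * R) := by rw [hXR]
    _ ≤ op2 X * frob R := h1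
    _ ≤ op2 X * (C * frob W) :=
        mul_le_mul_of_nonneg_left h2 (op2_nonneg X)
    _ ≤ op2 X * (C * (op2 X⁻¹ * frob V)) := by
        apply mul_le_mul_of_nonneg_left _ (op2_nonneg X)
        exact mul_le_mul_of_nonneg_left h3 hC0
    _ = frob V * op2 X * op2 X⁻¹ * C := by ring

/-- a posteriori bound
`‖f(A)B − F_j‖_F ≤ κ_eig(A) ‖Π U_{j+1} Γ_{j+1}‖_F maxₕ ‖Mₕ‖₂`, together with the key
linear-algebra step `‖∑ₕ xₕyₕ* V Mₕ‖_F ≤ ‖V‖_F ‖X‖₂ ‖X⁻¹‖₂ maxₕ ‖Mₕ‖₂`. -/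
theorem matfun_error_bound {n j s : ℕ} (hj : 0 < j)
    (X : Matrix (Fin n) (Fin n) ℂ) (hX : IsUnit X)
    (K Aj fAj : Matrix (Fin j × Fin s) (Fin j × Fin s) ℂ)
    (lam : Fin n → ℂ) (f : ℂ → ℂ) (RB : Mat s)
    (Pi : Matrix (Fin n) (Fin n) ℂ) (u : Matrix (Fin n) (Fin s) ℂ) (Γ : Mat s)
    (hspec : ∀ h : Fin n,
      ((lam h) • (1 : Matrix (Fin j × Fin s) (Fin j × Fin s) ℂ) - Aj).det ≠ 0)
    (M : Fin n → Mat s)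
    (hM : ∀ h : Fin n, M h =
      (blkE (s := s) (⟨j - 1, by omega⟩ : Fin j))ᴴ * K⁻¹ *
        ((fAj - f (lam h) • (1 : Matrix (Fin j × Fin s) (Fin j × Fin s) ℂ)) *
          (Aj - (lam h) • (1 : Matrix (Fin j × Fin s) (Fin j × Fin s) ℂ))⁻¹) *
        blkE (s := s) (⟨0, hj⟩ : Fin j) * RB)
    (Err : Matrix (Fin n) (Fin s) ℂ)
    (herr : Err = ∑ h : Fin n,
      Matrix.vecMulVec (fun p => X p h) (fun q => X⁻¹ h q) * (Pi * u * Γ) * M h) :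
    frob Err ≤ (op2 X * op2 X⁻¹) * frob (Pi * u * Γ) * ⨆ h : Fin n, op2 (M h) ∧
    ∀ (V : Matrix (Fin n) (Fin s) ℂ) (Mh : Fin n → Mat s),
      frob (∑ h : Fin n,
          Matrix.vecMulVec (fun p => X p h) (fun q => X⁻¹ h q) * V * Mh h) ≤
        frob V * op2 X * op2 X⁻¹ * ⨆ h : Fin n, op2 (Mh h) := by
  constructor
  · rw [herr]
    exact (key_step X (Pi * u * Γ) M).trans_eq (by ring)
  · exact fun V Mh => key_step X V Mh
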